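/- The second derivative of α ↦ P(α/2, m/2) with respect to α equals ((α/2)^{m/2-2} / (4Γ(m/2))) · e^{-α/2} · (m/2 - α/2 - 1), for α > 0 and m > 0. -/

import Mathlib

open Real MeasureTheory Set Filter

/-- Regularized lower incomplete gamma function. -/
noncomputable def P (x s : ℝ) : ℝ :=
  (Real.Gamma s)⁻¹ * ∫ t in (0:ℝ)..x, t ^ (s - 1) * Real.exp (-t)

lemma hasDerivAt_P_aux {s x : ℝ} (hs : 0 < s) (hx : 0 < x) :
    HasDerivAt (fun u : ℝ => ∫ t in (0:ℝ)..u, t ^ (s - 1) * Real.exp (-t))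
      (x ^ (s - 1) * Real.exp (-x)) x := by
  have hint : IntervalIntegrable (fun t : ℝ => t ^ (s - 1) * Real.exp (-t)) volume 0 x := by
    rw [intervalIntegrable_iff_integrableOn_Ioc_of_le hx.le]
    have := (Real.GammaIntegral_convergent hs).mono_set (Ioc_subset_Ioi_self : Ioc 0 x ⊆ Ioi 0)
    exact this.congr_fun (fun t ht => mul_comm _ _) measurableSet_Ioc
  have hcont : ContinuousAt (fun t : ℝ => t ^ (s - 1) * Real.exp (-t)) x := by
    exact ((Real.continuousAt_rpow_const x _ (Or.inl hx.ne')).mul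
      ((Real.continuous_exp.comp continuous_neg).continuousAt))
  have hmeas : StronglyMeasurableAtFilter (fun t : ℝ => t ^ (s - 1) * Real.exp (-t))
      (nhds x) volume := by
    refine ⟨Ioi 0, Ioi_mem_nhds hx, ?_⟩
    exact (Measurable.aestronglyMeasurable (by fun_prop)).restrict
  exact intervalIntegral.integral_hasDerivAt_right hint hmeas hcont

theorem second_deriv_P_half (m α : ℝ) (hm : 0 < m) (hα : 0 < α) :
    deriv (deriv (fun a : ℝ => P (a / 2) (m / 2))) α =
      (α / 2) ^ (m / 2 - 2) / (4 * Real.Gamma (m / 2)) * Real.exp (-(α / 2)) *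
        (m / 2 - α / 2 - 1) := by
  set s := m / 2 with hsdef
  have hs : 0 < s := by positivity
  set c := (Real.Gamma s)⁻¹ with hc
  have hderiv : ∀ a : ℝ, 0 < a →
      HasDerivAt (fun a : ℝ => P (a / 2) s)
        (c * ((a / 2) ^ (s - 1) * Real.exp (-(a / 2))) * (1 / 2)) a := by
    intro a ha
    have ha2 : 0 < a / 2 := by positivity
    have hhalf : HasDerivAt (fun a : ℝ => a / 2) (1 / 2) a :=
      (hasDerivAt_id a).div_const 2
    have h1 := (hasDerivAt_P_aux hs ha2).comp a hhalf
    have h2 := h1.const_mul c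
    simpa [P, mul_assoc] using h2
  have hev : deriv (fun a : ℝ => P (a / 2) s) =ᶠ[nhds α]
      fun a => c * ((a / 2) ^ (s - 1) * Real.exp (-(a / 2))) * (1 / 2) := by
    filter_upwards [Ioi_mem_nhds hα] with a ha
    exact (hderiv a ha).deriv
  rw [hev.deriv_eq]
  have h2 : (0:ℝ) < α / 2 := by positivity
  have hpow : HasDerivAt (fun a : ℝ => (a / 2) ^ (s - 1))
      ((s - 1) * (α / 2) ^ (s - 1 - 1) * (1 / 2)) α :=
    by have h := (Real.hasDerivAt_rpow_const (x := α / 2) (p := s - 1) (Or.inl h2.ne')).comp α ((hasDerivAt_id α).div_const 2); exact h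
  have hexp : HasDerivAt (fun a : ℝ => Real.exp (-(a / 2)))
      (Real.exp (-(α / 2)) * (-(1 / 2))) α :=
    (Real.hasDerivAt_exp _).comp α (((hasDerivAt_id α).div_const 2).neg)
  have hg : HasDerivAt (fun a : ℝ => c * ((a / 2) ^ (s - 1) * Real.exp (-(a / 2))) * (1 / 2))
      (c * ((s - 1) * (α / 2) ^ (s - 1 - 1) * (1 / 2) * Real.exp (-(α / 2)) +
        (α / 2) ^ (s - 1) * (Real.exp (-(α / 2)) * (-(1 / 2)))) * (1 / 2)) α :=
    ((hpow.mul hexp).const_mul c).mul_const (1 / 2)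
  rw [hg.deriv]
  have hrw : (α / 2) ^ (s - 1) = (α / 2) ^ (s - 2) * (α / 2) := by
    rw [← Real.rpow_add_one h2.ne' (s - 2)]
    ring_nf
  have hrw2 : s - 1 - 1 = s - 2 := by ring
  rw [hrw2, hrw, hc]
  have hG : Real.Gamma s ≠ 0 := (Real.Gamma_pos_of_pos hs).ne'
  field_simp
  ring
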